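/- For every name-view simplex σ of dimension m and every integer D with 0 ≤ D ≤ m, the crash-failure operator image C_D(σ) is a pure simplicial complex of dimension D, and C_D(σ) is shellable. -/

import Mathlib

/-- `K` is an abstract simplicial complex: a finite family of finite sets closed
under taking subsets. -/
def IsComplex {α : Type*} [DecidableEq α] (K : Finset (Finset α)) : Prop :=
  ∀ σ ∈ K, ∀ τ ⊆ σ, τ ∈ K

/-- `σ` is a facet of `K`: a simplex of `K` that is maximal under inclusion. -/
def IsFacet {α : Type*} (K : Finset (Finset α)) (σ : Finset α) : Prop :=
  σ ∈ K ∧ ∀ τ ∈ K, σ ⊆ τ → σ = τ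

/-- Given a linear ordering `φ 0, …, φ t` of facets, the family of all subsets of
`φ j` that are contained in some earlier facet `φ i`, `i < j`. -/
def ShellingComplex {α : Type*} [DecidableEq α] {t : ℕ} (φ : Fin (t + 1) → Finset α)
    (j : Fin (t + 1)) : Finset (Finset α) :=
  (φ j).powerset.filter (fun μ => ∃ i, i < j ∧ μ ⊆ φ i)

/-- `φ 0, …, φ t` is a shelling order of `K`: it enumerates the facets of `K` without
repetition, and for every `0 < j` the family of all subsets of `φ j` contained in some
earlier facet is a pure simplicial complex of dimension `dim (φ j) - 1`. -/
def IsShellingOrder {α : Type*} [DecidableEq α] (K : Finset (Finset α)) {t : ℕ}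
    (φ : Fin (t + 1) → Finset α) : Prop :=
  Function.Injective φ ∧ (∀ σ, IsFacet K σ ↔ ∃ i, φ i = σ) ∧
  ∀ j : Fin (t + 1), 0 < j →
    (∃ τ ∈ ShellingComplex φ j, τ.card = (φ j).card - 1) ∧
    (∀ τ, IsFacet (ShellingComplex φ j) τ → τ.card = (φ j).card - 1)

/-- A pure simplicial complex is shellable if its facets admit a shelling order. -/
def IsShellable {α : Type*} [DecidableEq α] (K : Finset (Finset α)) : Prop :=
  ∃ (t : ℕ) (φ : Fin (t + 1) → Finset α), IsShellingOrder K φ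

/-- The pseudosphere `Ψ(P', S)`: simplexes are the sets `{(i, v i) : i ∈ Q}` for
`Q ⊆ P'`, with one chosen value `v i ∈ S i` for each `i ∈ Q`. -/
def Pseudosphere {P V : Type*} [DecidableEq P] [DecidableEq V]
    (P' : Finset P) (S : P → Finset V) : Finset (Finset (P × V)) :=
  (P'.biUnion (fun i => (S i).image (fun v => (i, v)))).powerset.filter
    (fun σ => ∀ x ∈ σ, ∀ y ∈ σ, x.1 = y.1 → x = y)

/-- A name-view simplex: a finite set of (process, view) pairs whose first
coordinates are pairwise distinct. -/
def IsNameView {P V : Type*} (σ : Finset (P × V)) : Prop :=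
  ∀ x ∈ σ, ∀ y ∈ σ, x.1 = y.1 → x = y

/-- The crash-failure operator
`C_D(σ) = ⋃_{τ ∈ Faces^D(σ)} Ψ(names(τ), S^{τ,σ})`,
where for `p ∈ names(τ)` the value set `S^{τ,σ}_p` is the set of all
name-view simplexes `μ` with `τ ⊆ μ ⊆ σ`. -/
def crashOp {P V : Type*} [DecidableEq P] [DecidableEq V] (D : ℕ)
    (σ : Finset (P × V)) : Finset (Finset (P × Finset (P × V))) :=
  (σ.powerset.filter (fun τ => τ.card = D + 1)).biUnion
    (fun τ => Pseudosphere (τ.image Prod.fst)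
      (fun _ => σ.powerset.filter (fun μ => τ ⊆ μ)))

namespace Stmt2Aux

lemma sum_two_pow_le {u : Finset ℕ} {M : ℕ} (h : ∀ j ∈ u, j < M) :
    ∑ j ∈ u, 2 ^ j ≤ 2 ^ M - 1 := by
  calc ∑ j ∈ u, 2 ^ j ≤ ∑ j ∈ Finset.range M, 2 ^ j :=
        Finset.sum_le_sum_of_subset (fun j hj => Finset.mem_range.mpr (h j hj))
    _ = 2 ^ M - 1 := by simp [Nat.geomSum_eq]

lemma colex_max {s t : Finset ℕ} (hne : s ≠ t) (hle : ∑ j ∈ s, 2 ^ j ≤ ∑ j ∈ t, 2 ^ j) :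
    ∃ M, M ∈ t ∧ M ∉ s ∧ ∀ j, ((j ∈ s ∧ j ∉ t) ∨ (j ∈ t ∧ j ∉ s)) → j ≤ M := by
  set Δ := (s \ t) ∪ (t \ s) with hΔ
  have hΔmem : ∀ j, j ∈ Δ ↔ ((j ∈ s ∧ j ∉ t) ∨ (j ∈ t ∧ j ∉ s)) := by
    intro j; simp [hΔ, Finset.mem_union, Finset.mem_sdiff]
  have hΔne : Δ.Nonempty := by
    rcases Finset.eq_empty_or_nonempty Δ with h | h
    · exfalso; apply hne
      apply Finset.Subset.antisymm <;> intro j hj <;> by_contra hj2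
      · exact Finset.notMem_empty j (h ▸ (hΔmem j).mpr (Or.inl ⟨hj, hj2⟩))
      · exact Finset.notMem_empty j (h ▸ (hΔmem j).mpr (Or.inr ⟨hj, hj2⟩))
    · exact h
  set M := Δ.max' hΔne with hM
  have hmax : ∀ j, ((j ∈ s ∧ j ∉ t) ∨ (j ∈ t ∧ j ∉ s)) → j ≤ M :=
    fun j hj => Finset.le_max' _ j ((hΔmem j).mpr hj)
  have hMΔ : M ∈ Δ := Finset.max'_mem _ _
  by_cases hMt : M ∈ t
  · refine ⟨M, hMt, ?_, hmax⟩
    rcases (hΔmem M).mp hMΔ with h | h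
    · exact absurd hMt h.2
    · exact h.2
  · exfalso
    have hMs : M ∈ s := by
      rcases (hΔmem M).mp hMΔ with h | h
      · exact h.1
      · exact absurd h.1 hMt
    have hsplit : ∀ u : Finset ℕ,
        ∑ j ∈ u, 2 ^ j = ∑ j ∈ u.filter (fun j => M < j), 2 ^ j
          + ∑ j ∈ u.filter (fun j => ¬ M < j), 2 ^ j :=
      fun u => (Finset.sum_filter_add_sum_filter_not u _ _).symm
    have hhigh : s.filter (fun j => M < j) = t.filter (fun j => M < j) := by
      ext j
      simp only [Finset.mem_filter]
      constructor
      · rintro ⟨hj, hMj⟩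
        refine ⟨?_, hMj⟩
        by_contra hjt
        exact absurd (hmax j (Or.inl ⟨hj, hjt⟩)) (not_le.mpr hMj)
      · rintro ⟨hj, hMj⟩
        refine ⟨?_, hMj⟩
        by_contra hjs
        exact absurd (hmax j (Or.inr ⟨hj, hjs⟩)) (not_le.mpr hMj)
    have h1 : 2 ^ M ≤ ∑ j ∈ s.filter (fun j => ¬ M < j), 2 ^ j := by
      apply Finset.single_le_sum (f := fun j => 2 ^ j) (fun i _ => Nat.zero_le _)
      simp [hMs]
    have h2 : ∑ j ∈ t.filter (fun j => ¬ M < j), 2 ^ j ≤ 2 ^ M - 1 := by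
      apply sum_two_pow_le
      intro j hj
      simp only [Finset.mem_filter, not_lt] at hj
      rcases Nat.lt_or_ge j M with h | h
      · exact h
      · exact absurd (le_antisymm hj.2 h ▸ hj.1) hMt
    have hlt : ∑ j ∈ t, 2 ^ j < ∑ j ∈ s, 2 ^ j := by
      rw [hsplit s, hsplit t, ← hhigh]
      have h3 : (0:ℕ) < 2 ^ M := Nat.pow_pos (by norm_num)
      have : ∑ j ∈ t.filter (fun j => ¬ M < j), 2 ^ j < ∑ j ∈ s.filter (fun j => ¬ M < j), 2 ^ j :=
        lt_of_le_of_lt h2 (lt_of_lt_of_le (Nat.sub_lt h3 Nat.one_pos) h1)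
      omega
    exact absurd hle (not_le.mpr hlt)

variable {P V : Type*} [DecidableEq P] [DecidableEq V]

variable (σ : Finset (P × V))

noncomputable def eIdx (x : P × V) : ℕ :=
  if h : x ∈ σ then (σ.equivFin ⟨x, h⟩ : Fin σ.card).val else 0

lemma eIdx_lt {x : P × V} (hx : x ∈ σ) : eIdx σ x < σ.card := by
  rw [eIdx, dif_pos hx]; exact (σ.equivFin ⟨x, hx⟩).isLt

lemma eIdx_inj {x y : P × V} (hx : x ∈ σ) (hy : y ∈ σ) (h : eIdx σ x = eIdx σ y) : x = y := by
  unfold eIdx at h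
  rw [dif_pos hx, dif_pos hy] at h
  have := σ.equivFin.injective (Fin.val_injective h)
  exact congrArg Subtype.val this

noncomputable def pIdx (p : P) : ℕ :=
  ∑ x ∈ σ.attach, if (x.1 : P × V).1 = p then eIdx σ x.1 else 0

variable {σ}

lemma pIdx_eq (hσ : IsNameView σ) {x : P × V} (hx : x ∈ σ) : pIdx σ x.1 = eIdx σ x := by
  rw [pIdx]
  rw [Finset.sum_eq_single_of_mem (⟨x, hx⟩ : {y // y ∈ σ}) (Finset.mem_attach _ _)]
  · simp
  · intro b _ hb
    rw [if_neg]
    intro h1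
    exact hb (Subtype.ext (hσ b.1 b.2 x hx h1))

lemma pIdx_lt (hσ : IsNameView σ) {p : P} (hp : p ∈ σ.image Prod.fst) : pIdx σ p < σ.card := by
  obtain ⟨x, hx, rfl⟩ := Finset.mem_image.mp hp
  rw [pIdx_eq hσ hx]; exact eIdx_lt σ hx

lemma pIdx_inj (hσ : IsNameView σ) {p q : P} (hp : p ∈ σ.image Prod.fst)
    (hq : q ∈ σ.image Prod.fst) (h : pIdx σ p = pIdx σ q) : p = q := by
  obtain ⟨x, hx, rfl⟩ := Finset.mem_image.mp hp
  obtain ⟨y, hy, rfl⟩ := Finset.mem_image.mp hq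
  rw [pIdx_eq hσ hx, pIdx_eq hσ hy] at h
  exact congrArg Prod.fst (eIdx_inj σ hx hy h)

variable (σ)

noncomputable def vKey (μ : Finset (P × V)) : ℕ :=
  ∑ x ∈ σ.attach, if (x.1 : P × V) ∈ μ then 0 else 2 ^ eIdx σ x.1

noncomputable def Jv (μ : Finset (P × V)) : Finset ℕ :=
  (σ.attach.filter (fun x => x.1 ∉ μ)).image (fun x => eIdx σ x.1)

lemma vKey_eq_sum (μ : Finset (P × V)) : vKey σ μ = ∑ j ∈ Jv σ μ, 2 ^ j := by
  rw [Jv, Finset.sum_image]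
  · rw [vKey, Finset.sum_filter]
    apply Finset.sum_congr rfl
    intro x _
    by_cases h : (x.1 : P × V) ∈ μ <;> simp [h]
  · intro x _ y _ h
    exact Subtype.ext (eIdx_inj σ x.2 y.2 h)

lemma vKey_self : vKey σ σ = 0 := by
  rw [vKey]
  apply Finset.sum_eq_zero
  intro x _
  simp [x.2]

lemma vKey_le (μ : Finset (P × V)) : vKey σ μ ≤ 2 ^ σ.card - 1 := by
  rw [vKey_eq_sum]
  apply sum_two_pow_le
  intro j hj
  obtain ⟨x, _, rfl⟩ := Finset.mem_image.mp hj
  exact eIdx_lt σ x.2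

lemma vKey_eq_zero {μ : Finset (P × V)} (hμ : μ ⊆ σ) (h : vKey σ μ = 0) : μ = σ := by
  apply Finset.Subset.antisymm hμ
  intro x hx
  by_contra hxμ
  have h2 := Finset.sum_eq_zero_iff.mp h ⟨x, hx⟩ (Finset.mem_attach _ _)
  rw [if_neg hxμ] at h2
  exact absurd h2 (Nat.pos_iff_ne_zero.mp (Nat.pow_pos (by norm_num)))

variable {σ}

lemma vKey_inj {μ μ' : Finset (P × V)} (hμ : μ ⊆ σ) (hμ' : μ' ⊆ σ)
    (h : vKey σ μ = vKey σ μ') : μ = μ' := by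
  have hJ : Jv σ μ = Jv σ μ' := by
    by_contra hne
    rw [vKey_eq_sum, vKey_eq_sum] at h
    obtain ⟨M1, hM1t, hM1s, hmax1⟩ := colex_max hne (le_of_eq h)
    obtain ⟨M2, hM2t, hM2s, hmax2⟩ := colex_max (Ne.symm hne) (le_of_eq h.symm)
    have h12 : M2 ≤ M1 := hmax1 M2 (Or.inl ⟨hM2t, hM2s⟩)
    have h21 : M1 ≤ M2 := hmax2 M1 (Or.inl ⟨hM1t, hM1s⟩)
    exact hM2s (le_antisymm h21 h12 ▸ hM1t)
  ext x
  constructor <;> intro hx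
  · have hxσ : x ∈ σ := hμ hx
    by_contra hx2
    have hmem : eIdx σ x ∈ Jv σ μ' :=
      Finset.mem_image.mpr ⟨⟨x, hxσ⟩,
        Finset.mem_filter.mpr ⟨Finset.mem_attach _ _, hx2⟩, rfl⟩
    rw [← hJ] at hmem
    obtain ⟨y, hy, hey⟩ := Finset.mem_image.mp hmem
    apply (Finset.mem_filter.mp hy).2
    rw [eIdx_inj σ y.2 hxσ hey]
    exact hx
  · have hxσ : x ∈ σ := hμ' hx
    by_contra hx2
    have hmem : eIdx σ x ∈ Jv σ μ :=
      Finset.mem_image.mpr ⟨⟨x, hxσ⟩,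
        Finset.mem_filter.mpr ⟨Finset.mem_attach _ _, hx2⟩, rfl⟩
    rw [hJ] at hmem
    obtain ⟨y, hy, hey⟩ := Finset.mem_image.mp hmem
    apply (Finset.mem_filter.mp hy).2
    rw [eIdx_inj σ y.2 hxσ hey]
    exact hx

variable (σ)

noncomputable def TJ (N : Finset P) : Finset ℕ :=
  (σ.attach.filter (fun x => (x.1 : P × V).1 ∈ N)).image (fun x => eIdx σ x.1)

noncomputable def Tkey (N : Finset P) : ℕ := ∑ j ∈ TJ σ N, 2 ^ j

lemma mem_TJ {N : Finset P} {j : ℕ} :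
    j ∈ TJ σ N ↔ ∃ x : P × V, ∃ _ : x ∈ σ, x.1 ∈ N ∧ eIdx σ x = j := by
  simp only [TJ, Finset.mem_image, Finset.mem_filter, Finset.mem_attach, true_and]
  constructor
  · rintro ⟨x, hx, rfl⟩
    exact ⟨x.1, x.2, hx, rfl⟩
  · rintro ⟨x, hx, hxN, rfl⟩
    exact ⟨⟨x, hx⟩, hxN, rfl⟩

variable {σ}

lemma TJ_inj (hσ : IsNameView σ) {N N' : Finset P} (hN : N ⊆ σ.image Prod.fst)
    (hN' : N' ⊆ σ.image Prod.fst) (h : TJ σ N = TJ σ N') : N = N' := by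
  ext p
  constructor <;> intro hp
  · obtain ⟨x, hx, rfl⟩ := Finset.mem_image.mp (hN hp)
    have hmem : eIdx σ x ∈ TJ σ N' := h ▸ (mem_TJ σ).mpr ⟨x, hx, hp, rfl⟩
    obtain ⟨y, hy, hyN, hey⟩ := (mem_TJ σ).mp hmem
    rw [← eIdx_inj σ hy hx hey]
    exact hyN
  · obtain ⟨x, hx, rfl⟩ := Finset.mem_image.mp (hN' hp)
    have hmem : eIdx σ x ∈ TJ σ N := h.symm ▸ (mem_TJ σ).mpr ⟨x, hx, hp, rfl⟩
    obtain ⟨y, hy, hyN, hey⟩ := (mem_TJ σ).mp hmem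
    rw [← eIdx_inj σ hy hx hey]
    exact hyN

lemma Tkey_inj (_hσ : IsNameView σ) {N N' : Finset P} (hN : N ⊆ σ.image Prod.fst)
    (hN' : N' ⊆ σ.image Prod.fst) (h : Tkey σ N = Tkey σ N') : N = N' := by
  apply TJ_inj _hσ hN hN'
  by_contra hne
  obtain ⟨M1, hM1t, hM1s, hmax1⟩ := colex_max hne (le_of_eq h)
  obtain ⟨M2, hM2t, hM2s, hmax2⟩ := colex_max (Ne.symm hne) (le_of_eq h.symm)
  have h12 : M2 ≤ M1 := hmax1 M2 (Or.inl ⟨hM2t, hM2s⟩)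
  have h21 : M1 ≤ M2 := hmax2 M1 (Or.inl ⟨hM1t, hM1s⟩)
  exact hM2s (le_antisymm h21 h12 ▸ hM1t)

variable (σ)

noncomputable def key2 (s : Finset (P × Finset (P × V))) : ℕ :=
  ∑ w ∈ s, vKey σ w.2 * (2 ^ σ.card) ^ pIdx σ w.1

noncomputable def key (s : Finset (P × Finset (P × V))) : ℕ :=
  Tkey σ (s.image Prod.fst) * (2 ^ σ.card) ^ σ.card + key2 σ s

lemma geom_aux (B n : ℕ) (hB : 1 ≤ B) :
    ∑ j ∈ Finset.range n, (B - 1) * B ^ j + 1 = B ^ n := by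
  induction n with
  | zero => simp
  | succ n ih =>
    rw [Finset.sum_range_succ, pow_succ]
    have h : B - 1 + 1 = B := Nat.succ_pred_eq_of_pos hB
    calc ∑ j ∈ Finset.range n, (B - 1) * B ^ j + (B - 1) * B ^ n + 1
        = (∑ j ∈ Finset.range n, (B - 1) * B ^ j + 1) + (B - 1) * B ^ n := by ring
      _ = B ^ n + (B - 1) * B ^ n := by rw [ih]
      _ = (B - 1 + 1) * B ^ n := by ring
      _ = B ^ n * B := by rw [h]; ring

variable {σ}

lemma key2_lt (hσ : IsNameView σ) {s : Finset (P × Finset (P × V))}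
    (hnv : IsNameView s) (hnames : s.image Prod.fst ⊆ σ.image Prod.fst) :
    key2 σ s < (2 ^ σ.card) ^ σ.card := by
  set B := 2 ^ σ.card with hB
  have hB1 : 1 ≤ B := Nat.one_le_two_pow
  have step1 : key2 σ s ≤ ∑ w ∈ s, (B - 1) * B ^ pIdx σ w.1 := by
    apply Finset.sum_le_sum
    intro w _
    exact Nat.mul_le_mul_right _ (vKey_le σ w.2)
  have step2 : ∑ w ∈ s, (B - 1) * B ^ pIdx σ w.1
      = ∑ j ∈ s.image (fun w => pIdx σ w.1), (B - 1) * B ^ j := by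
    rw [Finset.sum_image]
    intro w hw u hu h
    exact hnv w hw u hu (pIdx_inj hσ (hnames (Finset.mem_image_of_mem _ hw))
      (hnames (Finset.mem_image_of_mem _ hu)) h)
  have step3 : ∑ j ∈ s.image (fun w => pIdx σ w.1), (B - 1) * B ^ j
      ≤ ∑ j ∈ Finset.range σ.card, (B - 1) * B ^ j := by
    apply Finset.sum_le_sum_of_subset
    intro j hj
    obtain ⟨w, hw, rfl⟩ := Finset.mem_image.mp hj
    exact Finset.mem_range.mpr (pIdx_lt hσ (hnames (Finset.mem_image_of_mem _ hw)))
  have hg := geom_aux B σ.card hB1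
  omega

lemma key_lt_of_key2 {s s' : Finset (P × Finset (P × V))}
    (h : Tkey σ (s'.image Prod.fst) = Tkey σ (s.image Prod.fst))
    (h2 : key2 σ s' < key2 σ s) : key σ s' < key σ s := by
  rw [key, key, h]
  omega

lemma key_lt_of_Tkey {s s' : Finset (P × Finset (P × V))}
    (hb : key2 σ s' < (2 ^ σ.card) ^ σ.card)
    (h : Tkey σ (s'.image Prod.fst) < Tkey σ (s.image Prod.fst)) : key σ s' < key σ s := by
  rw [key, key]
  set C := (2 ^ σ.card) ^ σ.card with hC
  calc Tkey σ (s'.image Prod.fst) * C + key2 σ s'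
      < Tkey σ (s'.image Prod.fst) * C + C := by omega
    _ = (Tkey σ (s'.image Prod.fst) + 1) * C := by ring
    _ ≤ Tkey σ (s.image Prod.fst) * C := Nat.mul_le_mul_right _ h
    _ ≤ _ := Nat.le_add_right _ _


section CrashOp

variable {P V : Type*} [DecidableEq P] [DecidableEq V] {D : ℕ}

lemma mem_crashOp_iff {σ : Finset (P × V)} {s : Finset (P × Finset (P × V))} :
    s ∈ crashOp D σ ↔ ∃ τ, τ ⊆ σ ∧ τ.card = D + 1 ∧
      (∀ w ∈ s, w.1 ∈ τ.image Prod.fst ∧ w.2 ⊆ σ ∧ τ ⊆ w.2) ∧ IsNameView s := by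
  constructor
  · intro h
    rw [crashOp, Finset.mem_biUnion] at h
    obtain ⟨τ, hτ, hsΨ⟩ := h
    rw [Finset.mem_filter, Finset.mem_powerset] at hτ
    rw [Pseudosphere, Finset.mem_filter, Finset.mem_powerset] at hsΨ
    obtain ⟨hsub, hnv⟩ := hsΨ
    refine ⟨τ, hτ.1, hτ.2, ?_, hnv⟩
    intro w hw
    obtain ⟨i, hi, hw2⟩ := Finset.mem_biUnion.mp (hsub hw)
    obtain ⟨v, hv, hvw⟩ := Finset.mem_image.mp hw2
    obtain ⟨hv1, hv2⟩ := Finset.mem_filter.mp hv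
    subst hvw
    exact ⟨hi, Finset.mem_powerset.mp hv1, hv2⟩
  · rintro ⟨τ, hτσ, hτc, hw, hnv⟩
    rw [crashOp, Finset.mem_biUnion]
    refine ⟨τ, Finset.mem_filter.mpr ⟨Finset.mem_powerset.mpr hτσ, hτc⟩, ?_⟩
    rw [Pseudosphere, Finset.mem_filter, Finset.mem_powerset]
    refine ⟨?_, hnv⟩
    intro w hws
    obtain ⟨h1, h2, h3⟩ := hw w hws
    apply Finset.mem_biUnion.mpr
    exact ⟨w.1, h1, Finset.mem_image.mpr
      ⟨w.2, Finset.mem_filter.mpr ⟨Finset.mem_powerset.mpr h2, h3⟩, rfl⟩⟩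

lemma nameView_of_mem {σ : Finset (P × V)} {s : Finset (P × Finset (P × V))}
    (hs : s ∈ crashOp D σ) : IsNameView s := by
  obtain ⟨τ, _, _, _, hnv⟩ := mem_crashOp_iff.mp hs
  exact hnv

lemma names_sub_of_mem {σ : Finset (P × V)} {s : Finset (P × Finset (P × V))}
    (hs : s ∈ crashOp D σ) : s.image Prod.fst ⊆ σ.image Prod.fst := by
  obtain ⟨τ, hτσ, hτc, hw, hnv⟩ := mem_crashOp_iff.mp hs
  intro p hp
  obtain ⟨w, hws, rfl⟩ := Finset.mem_image.mp hp
  obtain ⟨h1, _, _⟩ := hw w hws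
  obtain ⟨x, hx, hxe⟩ := Finset.mem_image.mp h1
  exact Finset.mem_image.mpr ⟨x, hτσ hx, hxe⟩

lemma card_names {s : Finset (P × Finset (P × V))} (hnv : IsNameView s) :
    (s.image Prod.fst).card = s.card :=
  Finset.card_image_of_injOn (fun x hx y hy h => hnv x hx y hy h)

lemma card_le_of_mem {σ : Finset (P × V)} (hσ : IsNameView σ)
    {s : Finset (P × Finset (P × V))} (hs : s ∈ crashOp D σ) : s.card ≤ D + 1 := by
  obtain ⟨τ, hτσ, hτc, hw, hnv⟩ := mem_crashOp_iff.mp hs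
  have h1 : s.image Prod.fst ⊆ τ.image Prod.fst := by
    intro p hp
    obtain ⟨w, hws, rfl⟩ := Finset.mem_image.mp hp
    exact (hw w hws).1
  have h2 : (τ.image Prod.fst).card = D + 1 := by
    rw [Finset.card_image_of_injOn (fun x hx y hy h => hσ x (hτσ hx) y (hτσ hy) h), hτc]
  calc s.card = (s.image Prod.fst).card := (card_names hnv).symm
    _ ≤ (τ.image Prod.fst).card := Finset.card_le_card h1
    _ = D + 1 := h2

/-- the canonical (D+1)-simplex of σ with a given name set -/
def canon (σ : Finset (P × V)) (N : Finset P) : Finset (P × V) :=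
  σ.filter (fun x => x.1 ∈ N)

lemma canon_names {σ : Finset (P × V)} {N : Finset P} (hN : N ⊆ σ.image Prod.fst) :
    (canon σ N).image Prod.fst = N := by
  apply Finset.Subset.antisymm
  · intro p hp
    obtain ⟨x, hx, rfl⟩ := Finset.mem_image.mp hp
    exact (Finset.mem_filter.mp hx).2
  · intro p hp
    obtain ⟨x, hx, rfl⟩ := Finset.mem_image.mp (hN hp)
    exact Finset.mem_image.mpr ⟨x, Finset.mem_filter.mpr ⟨hx, hp⟩, rfl⟩

lemma canon_card {σ : Finset (P × V)} (hσ : IsNameView σ) {N : Finset P}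
    (hN : N ⊆ σ.image Prod.fst) : (canon σ N).card = N.card := by
  conv_rhs => rw [← canon_names hN]
  exact (Finset.card_image_of_injOn
    (fun x hx y hy h => hσ x (Finset.mem_filter.mp hx).1 y (Finset.mem_filter.mp hy).1 h)).symm

/-- every τ certifying membership of a facet equals the canonical one -/
lemma tau_eq_canon {σ : Finset (P × V)} (hσ : IsNameView σ) {τ : Finset (P × V)}
    (hτσ : τ ⊆ σ) {N : Finset P} (hτN : τ.image Prod.fst = N) : τ = canon σ N := by
  apply Finset.Subset.antisymm
  · intro x hx
    exact Finset.mem_filter.mpr ⟨hτσ hx, hτN ▸ Finset.mem_image_of_mem _ hx⟩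
  · intro y hy
    obtain ⟨hyσ, hyN⟩ := Finset.mem_filter.mp hy
    rw [← hτN] at hyN
    obtain ⟨x, hx, hxy⟩ := Finset.mem_image.mp hyN
    rwa [← hσ x (hτσ hx) y hyσ hxy]

/-- structure of facets: canonical τ is contained in all views -/
lemma facet_tau {σ : Finset (P × V)} (hσ : IsNameView σ)
    {s : Finset (P × Finset (P × V))} (hs : s ∈ crashOp D σ) (hc : s.card = D + 1) :
    ∀ w ∈ s, w.2 ⊆ σ ∧ canon σ (s.image Prod.fst) ⊆ w.2 := by
  obtain ⟨τ, hτσ, hτc, hw, hnv⟩ := mem_crashOp_iff.mp hs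
  have h1 : s.image Prod.fst ⊆ τ.image Prod.fst := by
    intro p hp
    obtain ⟨w, hws, rfl⟩ := Finset.mem_image.mp hp
    exact (hw w hws).1
  have h2 : (τ.image Prod.fst).card = D + 1 := by
    rw [Finset.card_image_of_injOn (fun x hx y hy h => hσ x (hτσ hx) y (hτσ hy) h), hτc]
  have h3 : s.image Prod.fst = τ.image Prod.fst := by
    apply Finset.eq_of_subset_of_card_le h1
    rw [h2, card_names hnv, hc]
  have h4 : τ = canon σ (s.image Prod.fst) := tau_eq_canon hσ hτσ h3.symm
  intro w hws
  obtain ⟨_, hw2, hw3⟩ := hw w hws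
  exact ⟨hw2, h4 ▸ hw3⟩

/-- construct a facet from a name set and a view assignment -/
lemma mk_mem {σ : Finset (P × V)} (hσ : IsNameView σ) {N : Finset P}
    (hN : N ⊆ σ.image Prod.fst) (hNc : N.card = D + 1)
    (f : P → Finset (P × V)) (hf1 : ∀ p ∈ N, f p ⊆ σ) (hf2 : ∀ p ∈ N, canon σ N ⊆ f p) :
    (N.image (fun p => (p, f p))) ∈ crashOp D σ ∧
      (N.image (fun p => (p, f p))).card = D + 1 := by
  constructor
  · rw [mem_crashOp_iff]
    refine ⟨canon σ N, fun x hx => (Finset.mem_filter.mp hx).1,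
      by rw [canon_card hσ hN, hNc], ?_, ?_⟩
    · intro w hw
      obtain ⟨p, hp, rfl⟩ := Finset.mem_image.mp hw
      refine ⟨?_, hf1 p hp, hf2 p hp⟩
      show p ∈ (canon σ N).image Prod.fst
      rw [canon_names hN]
      exact hp
    · intro x hx y hy hxy
      obtain ⟨p, hp, rfl⟩ := Finset.mem_image.mp hx
      obtain ⟨q, hq, rfl⟩ := Finset.mem_image.mp hy
      simp only at hxy
      subst hxy
      rfl
  · rw [Finset.card_image_of_injOn, hNc]
    intro p _ q _ h
    exact congrArg Prod.fst h

lemma mk_names {N : Finset P} (f : P → Finset (P × V)) :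
    (N.image (fun p => (p, f p))).image Prod.fst = N := by
  ext p
  simp [Finset.mem_image]

lemma mk_key2 (σ : Finset (P × V)) {N : Finset P} (f : P → Finset (P × V)) :
    key2 σ (N.image (fun p => (p, f p))) = ∑ p ∈ N, vKey σ (f p) * (2 ^ σ.card) ^ pIdx σ p := by
  rw [key2, Finset.sum_image]
  intro p _ q _ h
  exact congrArg Prod.fst h

/-- view extraction -/
def val (s : Finset (P × Finset (P × V))) (p : P) : Finset (P × V) :=
  (s.filter (fun w => w.1 = p)).biUnion Prod.snd

lemma val_eq {s : Finset (P × Finset (P × V))} (hnv : IsNameView s)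
    {w : P × Finset (P × V)} (hw : w ∈ s) : val s w.1 = w.2 := by
  have hf : s.filter (fun u => u.1 = w.1) = {w} := by
    ext u
    simp only [Finset.mem_filter, Finset.mem_singleton]
    constructor
    · rintro ⟨hu, h1⟩
      exact hnv u hu w hw h1
    · rintro rfl
      exact ⟨hw, rfl⟩
  rw [val, hf]
  simp

lemma val_mem {s : Finset (P × Finset (P × V))} (hnv : IsNameView s)
    {p : P} (hp : p ∈ s.image Prod.fst) : (p, val s p) ∈ s := by
  obtain ⟨w, hw, rfl⟩ := Finset.mem_image.mp hp
  rw [val_eq hnv hw]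
  exact hw

lemma eq_image_val {s : Finset (P × Finset (P × V))} (hnv : IsNameView s) :
    s = (s.image Prod.fst).image (fun p => (p, val s p)) := by
  ext w
  constructor
  · intro hw
    apply Finset.mem_image.mpr
    refine ⟨w.1, Finset.mem_image_of_mem _ hw, ?_⟩
    rw [val_eq hnv hw]
  · intro hw
    obtain ⟨p, hp, rfl⟩ := Finset.mem_image.mp hw
    exact val_mem hnv hp


lemma erase_card_aux {D : ℕ} {F : Finset (P × Finset (P × V))} (hFc : F.card = D + 1)
    {w : P × Finset (P × V)} (hw : w ∈ F) : (F.erase w).card = D := by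
  rw [Finset.card_erase_of_mem hw, hFc]
  omega

lemma main_lemma {σ : Finset (P × V)} (hσ : IsNameView σ) {D : ℕ}
    {E F : Finset (P × Finset (P × V))}
    (hE : E ∈ crashOp D σ) (hEc : E.card = D + 1)
    (hF : F ∈ crashOp D σ) (hFc : F.card = D + 1)
    (hne : E ≠ F) (hkey : key σ E ≤ key σ F)
    {μ : Finset (P × Finset (P × V))} (hμE : μ ⊆ E) (hμF : μ ⊆ F) :
    ∃ F', F' ∈ crashOp D σ ∧ F'.card = D + 1 ∧ key σ F' < key σ F ∧
      ∃ ρ, μ ⊆ ρ ∧ ρ ⊆ F ∧ ρ ⊆ F' ∧ ρ.card = D := by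
  have hnvE := nameView_of_mem hE
  have hnvF := nameView_of_mem hF
  have hNσ : F.image Prod.fst ⊆ σ.image Prod.fst := names_sub_of_mem hF
  have hN'σ : E.image Prod.fst ⊆ σ.image Prod.fst := names_sub_of_mem hE
  have hNc : (F.image Prod.fst).card = D + 1 := by rw [card_names hnvF, hFc]
  have hN'c : (E.image Prod.fst).card = D + 1 := by rw [card_names hnvE, hEc]
  have htauF := facet_tau hσ hF hFc
  have htauE := facet_tau hσ hE hEc
  have hvalF : ∀ p ∈ F.image Prod.fst, val F p ⊆ σ ∧ canon σ (F.image Prod.fst) ⊆ val F p :=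
    fun p hp => htauF _ (val_mem hnvF hp)
  have hvalE : ∀ p ∈ E.image Prod.fst, val E p ⊆ σ ∧ canon σ (E.image Prod.fst) ⊆ val E p :=
    fun p hp => htauE _ (val_mem hnvE hp)
  have hk2F : key2 σ F
      = ∑ p ∈ F.image Prod.fst, vKey σ (val F p) * (2 ^ σ.card) ^ pIdx σ p := by
    conv_lhs => rw [eq_image_val hnvF]
    rw [mk_key2]
  by_cases hNN : E.image Prod.fst = F.image Prod.fst
  · -- Case 1 : same name sets
    have hTk : Tkey σ (E.image Prod.fst) = Tkey σ (F.image Prod.fst) := by rw [hNN]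
    have hk2 : key2 σ E ≤ key2 σ F := by
      have h := hkey
      rw [key, key, hTk] at h
      omega
    have hk2E : key2 σ E
        = ∑ p ∈ F.image Prod.fst, vKey σ (val E p) * (2 ^ σ.card) ^ pIdx σ p := by
      conv_lhs => rw [eq_image_val hnvE]
      rw [mk_key2, hNN]
    have hdiff : ∃ p ∈ F.image Prod.fst, val E p ≠ val F p := by
      by_contra hall
      push_neg at hall
      apply hne
      rw [eq_image_val hnvE, eq_image_val hnvF, hNN]
      exact Finset.image_congr (fun p hp => by rw [hall p hp])
    obtain ⟨p0, hp0N, hp0lt⟩ : ∃ p ∈ F.image Prod.fst, vKey σ (val E p) < vKey σ (val F p) := by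
      by_contra hnone
      push_neg at hnone
      obtain ⟨pd, hpd, hpdne⟩ := hdiff
      have hpdE : pd ∈ E.image Prod.fst := by rw [hNN]; exact hpd
      have hstrict : vKey σ (val F pd) < vKey σ (val E pd) := by
        rcases lt_or_eq_of_le (hnone pd hpd) with h | h
        · exact h
        · exact absurd (vKey_inj (hvalE pd hpdE).1 (hvalF pd hpd).1 h.symm) hpdne
      have hcon : key2 σ F < key2 σ E := by
        rw [hk2E, hk2F]
        apply Finset.sum_lt_sum
        · intro p hp
          exact Nat.mul_le_mul_right _ (hnone p hp)
        · refine ⟨pd, hpd, ?_⟩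
          exact mul_lt_mul_of_pos_right hstrict
            (pow_pos (pow_pos (by norm_num) _) _)
      omega
    have hp0E : p0 ∈ E.image Prod.fst := by rw [hNN]; exact hp0N
    set g : P → Finset (P × V) := fun p => if p = p0 then val E p0 else val F p with hg
    have hmk := mk_mem (D := D) hσ hNσ hNc g
      (by
        intro p hp
        simp only [hg]
        by_cases h : p = p0
        · rw [if_pos h]; exact (hvalE p0 hp0E).1
        · rw [if_neg h]; exact (hvalF p hp).1)
      (by
        intro p hp
        simp only [hg]
        by_cases h : p = p0
        · rw [if_pos h, ← hNN]; exact (hvalE p0 hp0E).2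
        · rw [if_neg h]; exact (hvalF p hp).2)
    refine ⟨_, hmk.1, hmk.2, ?_, ?_⟩
    · apply key_lt_of_key2
      · rw [mk_names]
      · rw [mk_key2, hk2F]
        apply Finset.sum_lt_sum
        · intro p hp
          simp only [hg]
          by_cases h : p = p0
          · subst h
            rw [if_pos rfl]
            exact Nat.mul_le_mul_right _ (le_of_lt hp0lt)
          · rw [if_neg h]
        · refine ⟨p0, hp0N, ?_⟩
          simp only [hg, if_true, eq_self_iff_true]
          exact mul_lt_mul_of_pos_right hp0lt (pow_pos (pow_pos (by norm_num) _) _)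
    · refine ⟨F.erase (p0, val F p0), ?_, Finset.erase_subset _ _, ?_,
        erase_card_aux hFc (val_mem hnvF hp0N)⟩
      · intro w hw
        apply Finset.mem_erase.mpr
        refine ⟨?_, hμF hw⟩
        intro hww
        have h1 : val E w.1 = w.2 := val_eq hnvE (hμE hw)
        have h2 : w.1 = p0 := by rw [hww]
        rw [h2] at h1
        have : val E p0 = val F p0 := by rw [h1, hww]
        rw [this] at hp0lt
        exact lt_irrefl _ hp0lt
      · intro w hw
        obtain ⟨hwne, hwF⟩ := Finset.mem_erase.mp hw
        have h1 : val F w.1 = w.2 := val_eq hnvF hwF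
        have hw1 : w.1 ≠ p0 := by
          intro h
          apply hwne
          have : w = (w.1, w.2) := rfl
          rw [this, h, ← h1, h]
        apply Finset.mem_image.mpr
        refine ⟨w.1, Finset.mem_image_of_mem _ hwF, ?_⟩
        simp only [hg]
        simp only [if_neg hw1]
        rw [h1]
  · -- Case 2 : different name sets
    have hTkne : Tkey σ (E.image Prod.fst) ≠ Tkey σ (F.image Prod.fst) :=
      fun h => hNN (Tkey_inj hσ hN'σ hNσ h)
    have hTklt : Tkey σ (E.image Prod.fst) < Tkey σ (F.image Prod.fst) := by
      rcases lt_or_ge (Tkey σ (E.image Prod.fst)) (Tkey σ (F.image Prod.fst)) with h | h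
      · exact h
      · rcases lt_or_eq_of_le h with h2 | h2
        · exfalso
          have := key_lt_of_Tkey (s := E) (s' := F)
            (key2_lt hσ hnvF hNσ) h2
          omega
        · exact absurd h2.symm hTkne
    have hTJne : TJ σ (E.image Prod.fst) ≠ TJ σ (F.image Prod.fst) :=
      fun h => hNN (TJ_inj hσ hN'σ hNσ h)
    have hTklt' := hTklt
    rw [Tkey, Tkey] at hTklt'
    obtain ⟨M, hMF, hME, hmax⟩ := colex_max hTJne (le_of_lt hTklt')
    obtain ⟨x1, hx1σ, hx1N, hx1e⟩ := (mem_TJ σ).mp hMF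
    have hp1E : x1.1 ∉ E.image Prod.fst := by
      intro hp1
      exact hME (hx1e ▸ (mem_TJ σ).mpr ⟨x1, hx1σ, hp1, rfl⟩)
    have hp1μ : ∀ u ∈ μ, u.1 ≠ x1.1 := by
      intro u hu h
      exact hp1E (h ▸ Finset.mem_image_of_mem _ (hμE hu))
    by_cases h2a : ∃ w ∈ F, (∀ u ∈ μ, u.1 ≠ w.1) ∧ w.2 ≠ σ
    · -- Subcase 2a
      obtain ⟨w1, hw1F, hw1μ, hw1ne⟩ := h2a
      have hw1N : w1.1 ∈ F.image Prod.fst := Finset.mem_image_of_mem _ hw1F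
      have hvw1 : val F w1.1 = w1.2 := val_eq hnvF hw1F
      set g : P → Finset (P × V) := fun p => if p = w1.1 then σ else val F p with hg
      have hmk := mk_mem (D := D) hσ hNσ hNc g
        (by
          intro p hp
          simp only [hg]
          by_cases h : p = w1.1
          · rw [if_pos h]
          · rw [if_neg h]; exact (hvalF p hp).1)
        (by
          intro p hp
          simp only [hg]
          by_cases h : p = w1.1
          · rw [if_pos h]; exact fun x hx => (Finset.mem_filter.mp hx).1
          · rw [if_neg h]; exact (hvalF p hp).2)
      have hvpos : 0 < vKey σ (val F w1.1) := by
        apply Nat.pos_of_ne_zero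
        intro h0
        exact hw1ne (by rw [← hvw1]; exact vKey_eq_zero σ (hvalF w1.1 hw1N).1 h0)
      refine ⟨_, hmk.1, hmk.2, ?_, ?_⟩
      · apply key_lt_of_key2
        · rw [mk_names]
        · rw [mk_key2, hk2F]
          apply Finset.sum_lt_sum
          · intro p hp
            simp only [hg]
            by_cases h : p = w1.1
            · subst h
              simp only [if_true, eq_self_iff_true, vKey_self, Nat.zero_mul]
              exact Nat.zero_le _
            · rw [if_neg h]
          · refine ⟨w1.1, hw1N, ?_⟩
            simp only [hg, if_true, eq_self_iff_true, vKey_self, Nat.zero_mul]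
            exact Nat.mul_pos hvpos (pow_pos (pow_pos (by norm_num) _) _)
      · refine ⟨F.erase w1, ?_, Finset.erase_subset _ _, ?_, erase_card_aux hFc hw1F⟩
        · intro u hu
          apply Finset.mem_erase.mpr
          refine ⟨?_, hμF hu⟩
          intro huw
          exact hw1μ u hu (by rw [huw])
        · intro w hw
          obtain ⟨hwne, hwF⟩ := Finset.mem_erase.mp hw
          have h1 : val F w.1 = w.2 := val_eq hnvF hwF
          have hw1' : w.1 ≠ w1.1 := fun h => hwne (hnvF w hwF w1 hw1F h)
          apply Finset.mem_image.mpr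
          refine ⟨w.1, Finset.mem_image_of_mem _ hwF, ?_⟩
          simp only [hg]
          simp only [if_neg hw1']
          rw [h1]
    · -- Subcase 2b
      push_neg at h2a
      obtain ⟨q, hqE, hqF⟩ : ∃ q, q ∈ E.image Prod.fst ∧ q ∉ F.image Prod.fst := by
        rcases Finset.not_subset.mp (fun hsub => hNN
          (Finset.eq_of_subset_of_card_le hsub (by omega))) with ⟨q, h1, h2⟩
        exact ⟨q, h1, h2⟩
      obtain ⟨y, hyσ, hyq⟩ := Finset.mem_image.mp (hN'σ hqE)
      have hyTJ' : eIdx σ y ∈ TJ σ (E.image Prod.fst) :=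
        (mem_TJ σ).mpr ⟨y, hyσ, hyq ▸ hqE, rfl⟩
      have hyTJ : eIdx σ y ∉ TJ σ (F.image Prod.fst) := by
        intro h
        obtain ⟨x', hx'σ, hx'N, he⟩ := (mem_TJ σ).mp h
        rw [eIdx_inj σ hx'σ hyσ he] at hx'N
        exact hqF (hyq ▸ hx'N)
      have hyM : eIdx σ y < M := by
        rcases lt_or_eq_of_le (hmax _ (Or.inl ⟨hyTJ', hyTJ⟩)) with h | h
        · exact h
        · exact absurd (h ▸ hyTJ') hME
      set N'' : Finset P := insert q ((F.image Prod.fst).erase x1.1) with hN''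
      have hqer : q ∉ (F.image Prod.fst).erase x1.1 :=
        fun h => hqF (Finset.mem_of_mem_erase h)
      have hN''σ : N'' ⊆ σ.image Prod.fst := by
        rw [hN'']
        intro p hp
        rcases Finset.mem_insert.mp hp with h | h
        · rw [h]; exact hN'σ hqE
        · exact hNσ (Finset.mem_of_mem_erase h)
      have hN''c : N''.card = D + 1 := by
        rw [hN'', Finset.card_insert_of_notMem hqer, Finset.card_erase_of_mem hx1N, hNc]
        omega
      set g : P → Finset (P × V) := fun p => if p = q then σ else val F p with hg
      have hgsub : ∀ p ∈ N'', canon σ N'' ⊆ g p := by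
        intro p hp
        simp only [hg]
        by_cases h : p = q
        · rw [if_pos h]; exact fun x hx => (Finset.mem_filter.mp hx).1
        · rw [if_neg h]
          rcases Finset.mem_insert.mp (hN'' ▸ hp) with h' | h'
          · exact absurd h' h
          · have hpN : p ∈ F.image Prod.fst := Finset.mem_of_mem_erase h'
            intro x hx
            obtain ⟨hxσ, hxN''⟩ := Finset.mem_filter.mp hx
            rcases Finset.mem_insert.mp (hN'' ▸ hxN'') with hxq | hxe
            · -- x has name q hence x = y
              have hxy : x = y := hσ x hxσ y hyσ (by rw [hxq, hyq])
              subst hxy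
              by_cases hpμ : ∃ u ∈ μ, u.1 = p
              · obtain ⟨u, huμ, hup⟩ := hpμ
                have huF : u ∈ F := hμF huμ
                have hval : val F p = u.2 := by rw [← hup]; exact val_eq hnvF huF
                rw [hval]
                apply (htauE u (hμE huμ)).2
                exact Finset.mem_filter.mpr ⟨hxσ, by rw [hxq]; exact hqE⟩
              · push_neg at hpμ
                have h3 : val F p = σ :=
                  h2a (p, val F p) (val_mem hnvF hpN) (fun u hu => hpμ u hu)
                rw [h3]
                exact hxσ
            · exact (hvalF p hpN).2 (Finset.mem_filter.mpr ⟨hxσ, Finset.mem_of_mem_erase hxe⟩)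
      have hmk := mk_mem (D := D) hσ hN''σ hN''c g
        (by
          intro p hp
          simp only [hg]
          by_cases h : p = q
          · rw [if_pos h]
          · rw [if_neg h]
            rcases Finset.mem_insert.mp (hN'' ▸ hp) with h' | h'
            · exact absurd h' h
            · exact (hvalF p (Finset.mem_of_mem_erase h')).1)
        hgsub
      have hTJ'' : TJ σ N'' = insert (eIdx σ y) ((TJ σ (F.image Prod.fst)).erase M) := by
        ext j
        constructor
        · intro hj
          obtain ⟨x, hxσ, hxN, hxe⟩ := (mem_TJ σ).mp hj
          rcases Finset.mem_insert.mp (hN'' ▸ hxN) with h | h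
          · have : x = y := hσ x hxσ y hyσ (by rw [h, hyq])
            rw [← hxe, this]
            exact Finset.mem_insert_self _ _
          · apply Finset.mem_insert.mpr
            right
            apply Finset.mem_erase.mpr
            constructor
            · intro hjM
              have : x = x1 := eIdx_inj σ hxσ hx1σ (by rw [hxe, hjM, hx1e])
              exact (Finset.mem_erase.mp h).1 (by rw [← this])
            · exact (mem_TJ σ).mpr ⟨x, hxσ, Finset.mem_of_mem_erase h, hxe⟩
        · intro hj
          rcases Finset.mem_insert.mp hj with h | h
          · refine (mem_TJ σ).mpr ⟨y, hyσ, ?_, h.symm⟩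
            rw [hyq, hN'']
            exact Finset.mem_insert_self _ _
          · obtain ⟨hjM, hjTJ⟩ := Finset.mem_erase.mp h
            obtain ⟨x, hxσ, hxN, hxe⟩ := (mem_TJ σ).mp hjTJ
            refine (mem_TJ σ).mpr ⟨x, hxσ, ?_, hxe⟩
            rw [hN'']
            apply Finset.mem_insert.mpr
            right
            apply Finset.mem_erase.mpr
            refine ⟨?_, hxN⟩
            intro hxp1
            have : x = x1 := hσ x hxσ x1 hx1σ hxp1
            exact hjM (by rw [← hxe, this, hx1e])
      have hTklt'' : Tkey σ N'' < Tkey σ (F.image Prod.fst) := by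
        rw [Tkey, Tkey, hTJ'']
        rw [Finset.sum_insert (fun h => hyTJ (Finset.mem_of_mem_erase h))]
        rw [← Finset.add_sum_erase _ _ hMF]
        have : (2:ℕ) ^ eIdx σ y < 2 ^ M := Nat.pow_lt_pow_right (by norm_num) hyM
        omega
      refine ⟨_, hmk.1, hmk.2, ?_, ?_⟩
      · apply key_lt_of_Tkey
        · exact key2_lt hσ (nameView_of_mem hmk.1) (names_sub_of_mem hmk.1)
        · rw [mk_names]
          exact hTklt''
      · have hp1F : (x1.1, val F x1.1) ∈ F := val_mem hnvF hx1N
        refine ⟨F.erase (x1.1, val F x1.1), ?_, Finset.erase_subset _ _, ?_,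
          erase_card_aux hFc hp1F⟩
        · intro u hu
          apply Finset.mem_erase.mpr
          exact ⟨fun h => hp1μ u hu (by rw [h]), hμF hu⟩
        · intro w hw
          obtain ⟨hwne, hwF⟩ := Finset.mem_erase.mp hw
          have h1 : val F w.1 = w.2 := val_eq hnvF hwF
          have hw1 : w.1 ≠ x1.1 := by
            intro h
            apply hwne
            have : w = (w.1, w.2) := rfl
            rw [this, ← h1, h]
          have hwq : w.1 ≠ q := by
            intro h
            exact hqF (h ▸ Finset.mem_image_of_mem _ hwF)
          apply Finset.mem_image.mpr
          refine ⟨w.1, ?_, ?_⟩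
          · rw [hN'']
            apply Finset.mem_insert.mpr
            right
            exact Finset.mem_erase.mpr ⟨hw1, Finset.mem_image_of_mem _ hwF⟩
          · simp only [hg]
            simp only [if_neg hwq]
            rw [h1]


end CrashOp

section Assemble

variable {P V : Type*} [DecidableEq P] [DecidableEq V] {D : ℕ} {σ : Finset (P × V)}

lemma crashOp_subset_closed {s t : Finset (P × Finset (P × V))}
    (hs : s ∈ crashOp D σ) (ht : t ⊆ s) : t ∈ crashOp D σ := by
  rw [mem_crashOp_iff] at hs ⊢
  obtain ⟨τ, h1, h2, h3, h4⟩ := hs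
  exact ⟨τ, h1, h2, fun w hw => h3 w (ht hw), fun x hx y hy => h4 x (ht hx) y (ht hy)⟩

lemma exists_base (hσ : IsNameView σ) (hcard : D + 1 ≤ σ.card) :
    ∃ s ∈ crashOp D σ, s.card = D + 1 := by
  obtain ⟨τ, hτσ, hτc⟩ := Finset.exists_subset_card_eq hcard
  refine ⟨τ.image (fun x => (x.1, τ)), ?_, ?_⟩
  · rw [mem_crashOp_iff]
    refine ⟨τ, hτσ, hτc, ?_, ?_⟩
    · intro w hw
      obtain ⟨x, hx, rfl⟩ := Finset.mem_image.mp hw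
      exact ⟨Finset.mem_image_of_mem _ hx, hτσ, Finset.Subset.refl τ⟩
    · intro x hx y hy h
      obtain ⟨a, ha, rfl⟩ := Finset.mem_image.mp hx
      obtain ⟨b, hb, rfl⟩ := Finset.mem_image.mp hy
      simp only at h
      rw [hσ a (hτσ ha) b (hτσ hb) h]
  · rw [Finset.card_image_of_injOn, hτc]
    intro a ha b hb h
    simp only at h
    refine hσ a (hτσ ha) b (hτσ hb) ?_
    injection h

lemma exists_extension (hσ : IsNameView σ) {s : Finset (P × Finset (P × V))}
    (hs : s ∈ crashOp D σ) :
    ∃ t, s ⊆ t ∧ t ∈ crashOp D σ ∧ t.card = D + 1 := by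
  obtain ⟨τ, hτσ, hτc, hw, hnv⟩ := mem_crashOp_iff.mp hs
  set t := s ∪ (τ.filter (fun x => x.1 ∉ s.image Prod.fst)).image (fun x => (x.1, τ)) with ht
  have hmemt : ∀ w, w ∈ t ↔ w ∈ s ∨
      ∃ a ∈ τ, a.1 ∉ s.image Prod.fst ∧ (a.1, τ) = w := by
    intro w
    rw [ht, Finset.mem_union, Finset.mem_image]
    constructor
    · rintro (h | ⟨a, ha, rfl⟩)
      · exact Or.inl h
      · obtain ⟨ha1, ha2⟩ := Finset.mem_filter.mp ha
        exact Or.inr ⟨a, ha1, ha2, rfl⟩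
    · rintro (h | ⟨a, ha1, ha2, rfl⟩)
      · exact Or.inl h
      · exact Or.inr ⟨a, Finset.mem_filter.mpr ⟨ha1, ha2⟩, rfl⟩
  have htnv : IsNameView t := by
    intro x hx y hy hxy
    rcases (hmemt x).mp hx with hx' | ⟨a, ha1, ha2, rfl⟩ <;>
      rcases (hmemt y).mp hy with hy' | ⟨b, hb1, hb2, hby⟩
    · exact hnv x hx' y hy' hxy
    · exfalso
      apply hb2
      rw [← hby] at hxy
      simp only at hxy
      rw [← hxy]
      exact Finset.mem_image_of_mem _ hx'
    · exfalso
      apply ha2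
      simp only at hxy
      rw [hxy]
      exact Finset.mem_image_of_mem _ hy'
    · rw [← hby] at hxy ⊢
      simp only at hxy
      rw [hσ a (hτσ ha1) b (hτσ hb1) hxy]
  have htm : t ∈ crashOp D σ := by
    rw [mem_crashOp_iff]
    refine ⟨τ, hτσ, hτc, ?_, htnv⟩
    intro w hwt
    rcases (hmemt w).mp hwt with h | ⟨a, ha1, _, rfl⟩
    · exact hw w h
    · exact ⟨Finset.mem_image_of_mem _ ha1, hτσ, Finset.Subset.refl τ⟩
  have himg : t.image Prod.fst = τ.image Prod.fst := by
    apply Finset.Subset.antisymm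
    · intro p hp
      obtain ⟨w, hwt, rfl⟩ := Finset.mem_image.mp hp
      rcases (hmemt w).mp hwt with h | ⟨a, ha1, _, rfl⟩
      · exact (hw w h).1
      · exact Finset.mem_image_of_mem _ ha1
    · intro p hp
      obtain ⟨a, ha, rfl⟩ := Finset.mem_image.mp hp
      by_cases h : a.1 ∈ s.image Prod.fst
      · obtain ⟨w, hws, hw1⟩ := Finset.mem_image.mp h
        exact Finset.mem_image.mpr ⟨w, (hmemt w).mpr (Or.inl hws), hw1⟩
      · exact Finset.mem_image.mpr ⟨(a.1, τ), (hmemt _).mpr (Or.inr ⟨a, ha, h, rfl⟩), rfl⟩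
  have htc : t.card = D + 1 := by
    rw [← card_names htnv, himg,
      Finset.card_image_of_injOn (fun x hx y hy h => hσ x (hτσ hx) y (hτσ hy) h), hτc]
  exact ⟨t, fun w hw' => (hmemt w).mpr (Or.inl hw'), htm, htc⟩

lemma facet_iff (hσ : IsNameView σ) {s : Finset (P × Finset (P × V))} :
    IsFacet (crashOp D σ) s ↔ s ∈ crashOp D σ ∧ s.card = D + 1 := by
  constructor
  · rintro ⟨hs, hmax⟩
    obtain ⟨t, hst, htm, htc⟩ := exists_extension hσ hs
    have h := hmax t htm hst
    exact ⟨hs, h ▸ htc⟩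
  · rintro ⟨hs, hsc⟩
    refine ⟨hs, ?_⟩
    intro t htm hst
    exact Finset.eq_of_subset_of_card_le hst (by rw [hsc]; exact card_le_of_mem hσ htm)

lemma crashOp_shellable (hσ : IsNameView σ) (hcard : D + 1 ≤ σ.card) :
    IsShellable (crashOp D σ) := by
  classical
  set Fac := (crashOp D σ).filter (fun s => s.card = D + 1) with hFac
  have hFacmem : ∀ {s : Finset (P × Finset (P × V))},
      s ∈ Fac ↔ s ∈ crashOp D σ ∧ s.card = D + 1 := by
    intro s; rw [hFac, Finset.mem_filter]
  obtain ⟨s0, hs0, hs0c⟩ := exists_base hσ hcard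
  have hFne : Fac.Nonempty := ⟨s0, hFacmem.mpr ⟨hs0, hs0c⟩⟩
  have hpos : 0 < Fac.card := Finset.card_pos.mpr hFne
  set le : Finset (P × Finset (P × V)) → Finset (P × Finset (P × V)) → Bool :=
    fun a b => decide (key σ a ≤ key σ b) with hle
  set l := Fac.toList.mergeSort le with hl
  have hperm : l.Perm Fac.toList := List.mergeSort_perm _ _
  have hnodup : l.Nodup := hperm.nodup_iff.mpr (Finset.nodup_toList _)
  have hmeml : ∀ {a}, a ∈ l ↔ a ∈ Fac := fun {a} => hperm.mem_iff.trans Finset.mem_toList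
  have hlen : l.length = Fac.card := by rw [hperm.length_eq, Finset.length_toList]
  have hsorted : l.Pairwise (fun a b => le a b = true) := by
    apply List.pairwise_mergeSort
    · intro a b c h1 h2
      simp only [hle, decide_eq_true_eq] at h1 h2 ⊢
      omega
    · intro a b
      simp only [hle, Bool.or_eq_true, decide_eq_true_eq]
      omega
  have hkey_sorted : ∀ (i j : ℕ) (hi : i < l.length) (hj : j < l.length), i < j →
      key σ (l.get ⟨i, hi⟩) ≤ key σ (l.get ⟨j, hj⟩) := by
    intro i j hi hj hij
    have h := List.pairwise_iff_get.mp hsorted ⟨i, hi⟩ ⟨j, hj⟩ hij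
    simpa [hle] using h
  have hlen2 : ∀ j : Fin (Fac.card - 1 + 1), (j : ℕ) < l.length := by
    intro j
    rw [hlen]
    have := j.isLt
    omega
  set φ : Fin (Fac.card - 1 + 1) → Finset (P × Finset (P × V)) :=
    fun j => l.get ⟨j.val, hlen2 j⟩ with hφ
  have hφmem : ∀ j, φ j ∈ Fac := fun j => hmeml.mp (List.get_mem _ _)
  have hφinj : Function.Injective φ := by
    intro a b h
    have h2 := List.nodup_iff_injective_get.mp hnodup h
    exact Fin.ext (by simpa using congrArg Fin.val h2)
  have hφsurj : ∀ s, s ∈ Fac → ∃ i, φ i = s := by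
    intro s hs
    obtain ⟨n, hn⟩ := List.mem_iff_get.mp (hmeml.mpr hs)
    have hnlt : n.val < Fac.card - 1 + 1 := by
      have h4 : (n : ℕ) < Fac.card := lt_of_lt_of_le n.isLt hlen.le
      omega
    refine ⟨⟨n.val, hnlt⟩, ?_⟩
    rw [hφ]
    simp only
    rw [← hn]
  -- the key step
  have claim : ∀ (j : Fin (Fac.card - 1 + 1)), ∀ μ : Finset (P × Finset (P × V)),
      μ ⊆ φ j → (∃ i, i < j ∧ μ ⊆ φ i) →
      ∃ ρ, ρ ∈ ShellingComplex φ j ∧ μ ⊆ ρ ∧ ρ.card = D := by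
    intro j μ hμF ⟨i, hij, hμE⟩
    obtain ⟨hE1, hE2⟩ := hFacmem.mp (hφmem i)
    obtain ⟨hF1, hF2⟩ := hFacmem.mp (hφmem j)
    have hEneF : φ i ≠ φ j := fun h => ne_of_lt hij (hφinj h)
    have hkle : key σ (φ i) ≤ key σ (φ j) :=
      hkey_sorted i.val j.val (hlen2 i) (hlen2 j) hij
    obtain ⟨F', hF'm, hF'c, hF'k, ρ, hρ1, hρ2, hρ3, hρ4⟩ :=
      main_lemma hσ hE1 hE2 hF1 hF2 hEneF hkle hμE hμF
    have hF'l : F' ∈ l := hmeml.mpr (hFacmem.mpr ⟨hF'm, hF'c⟩)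
    obtain ⟨n, hn⟩ := List.mem_iff_get.mp hF'l
    have hnlt : n.val < Fac.card - 1 + 1 := by
      have h4 : (n : ℕ) < Fac.card := lt_of_lt_of_le n.isLt hlen.le
      omega
    set i' : Fin (Fac.card - 1 + 1) := ⟨n.val, hnlt⟩ with hi'
    have hφi' : φ i' = F' := by
      rw [hφ]
      simp only
      rw [← hn]
    have hi'j : i' < j := by
      rcases lt_trichotomy (i'.val) (j.val) with h | h | h
      · exact h
      · exfalso
        have : φ i' = φ j := congrArg φ (Fin.ext h)
        rw [hφi'] at this
        rw [this] at hF'k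
        exact lt_irrefl _ hF'k
      · exfalso
        have := hkey_sorted j.val i'.val (hlen2 j) (hlen2 i') h
        rw [show l.get ⟨i'.val, hlen2 i'⟩ = φ i' from rfl, hφi'] at this
        rw [show l.get ⟨j.val, hlen2 j⟩ = φ j from rfl] at this
        omega
    refine ⟨ρ, ?_, hρ1, hρ4⟩
    rw [ShellingComplex, Finset.mem_filter, Finset.mem_powerset]
    exact ⟨hρ2, ⟨i', hi'j, hφi' ▸ hρ3⟩⟩
  refine ⟨Fac.card - 1, φ, hφinj, ?_, ?_⟩
  · intro s
    rw [facet_iff hσ]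
    constructor
    · intro hs
      exact hφsurj s (hFacmem.mpr hs)
    · rintro ⟨i, rfl⟩
      exact hFacmem.mp (hφmem i)
  · intro j hj
    obtain ⟨hF1, hF2⟩ := hFacmem.mp (hφmem j)
    constructor
    · obtain ⟨ρ, hρSC, _, hρc⟩ := claim j ∅ (Finset.empty_subset _)
        ⟨0, hj, Finset.empty_subset _⟩
      refine ⟨ρ, hρSC, ?_⟩
      rw [hρc, hF2]
      omega
    · rintro τ' ⟨hτ'SC, hτ'max⟩
      rw [ShellingComplex, Finset.mem_filter, Finset.mem_powerset] at hτ'SC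
      obtain ⟨hsub, i, hij, hsubE⟩ := hτ'SC
      obtain ⟨ρ, hρSC, hτρ, hρc⟩ := claim j τ' hsub ⟨i, hij, hsubE⟩
      have h := hτ'max ρ hρSC hτρ
      rw [h, hρc, hF2]
      omega

end Assemble

end Stmt2Aux

/-- for every name-view simplex `σ` of dimension `m` (i.e. `|σ| = m + 1`)
and every `0 ≤ D ≤ m`, the crash-failure operator image `C_D(σ)` is a pure simplicial
complex of dimension `D` (it has a simplex of cardinality `D + 1` and all its facets
have cardinality `D + 1`), and `C_D(σ)` is shellable. -/
theorem stmt2 {P V : Type*} [DecidableEq P] [DecidableEq V]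
    (σ : Finset (P × V)) (hσ : IsNameView σ)
    (m D : ℕ) (hm : σ.card = m + 1) (hD : D ≤ m) :
    IsComplex (crashOp D σ) ∧
    (∃ s ∈ crashOp D σ, s.card = D + 1) ∧
    (∀ s, IsFacet (crashOp D σ) s → s.card = D + 1) ∧
    IsShellable (crashOp D σ) := by
  have hcard : D + 1 ≤ σ.card := by omega
  refine ⟨?_, Stmt2Aux.exists_base hσ hcard, ?_, Stmt2Aux.crashOp_shellable hσ hcard⟩
  · intro s hs t ht
    exact Stmt2Aux.crashOp_subset_closed hs ht
  · intro s hs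
    exact ((Stmt2Aux.facet_iff hσ).mp hs).2
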